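/- Let (Ω,Σ) be a measurable space and let (kₙ) be a sequence of bounded kernels on Ω with sup_{n∈ℕ} sup_{x∈Ω} |kₙ|(x,Ω) < ∞. Let Sₙ and Tₙ be the kernel operators on M(Ω) and on B_b(Ω), respectively, associated with kₙ. Then the following are equivalent: (i) for each x ∈ Ω and each A ∈ Σ the sequence (kₙ(x,A)) converges to a real number k(x,A); (ii) for each μ ∈ M(Ω) the sequence (Sₙμ) converges with respect to the topology σ(M(Ω),B_b(Ω)) to a measure Sμ ∈ M(Ω); (iii) for each f ∈ B_b(Ω) the sequence (Tₙf) converges with respect to the topology σ(B_b(Ω),M(Ω)) to a function Tf ∈ B_b(Ω). If these equivalent assertions hold, then k is a bounded kernel on Ω, S is the kernel operator on M(Ω) associated with k, and T is the kernel operator on B_b(Ω) associated with k. -/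

import Mathlib

open MeasureTheory Filter Topology

/-- The integral `∫ f dμ` of a function against a finite signed measure, defined via the
Jordan decomposition of `μ`. -/
noncomputable def sInt {Ω : Type*} [MeasurableSpace Ω] (μ : SignedMeasure Ω) (f : Ω → ℝ) : ℝ :=
  (∫ x, f x ∂μ.toJordanDecomposition.posPart) - ∫ x, f x ∂μ.toJordanDecomposition.negPart

/-- `f` belongs to `B_b(Ω)`, i.e. `f` is a bounded measurable real-valued function. -/
def IsBddMeas {Ω : Type*} [MeasurableSpace Ω] (f : Ω → ℝ) : Prop :=
  Measurable f ∧ ∃ C : ℝ, ∀ x, |f x| ≤ C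

/-- The total variation norm of a finite signed measure. -/
noncomputable def tvNorm {Ω : Type*} [MeasurableSpace Ω] (μ : SignedMeasure Ω) : ℝ :=
  (μ.totalVariation Set.univ).toReal

/-- A bounded kernel on `Ω`: `x ↦ k x` is a family of finite signed measures such that
`x ↦ k x A` is measurable for every measurable `A` and `sup_x |k x|(Ω) < ∞`. -/
def IsBoundedKernel {Ω : Type*} [MeasurableSpace Ω] (k : Ω → SignedMeasure Ω) : Prop :=
  (∀ A : Set Ω, MeasurableSet A → Measurable fun x => k x A) ∧
    ∃ C : ℝ, ∀ x, tvNorm (k x) ≤ C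

open scoped ENNReal

section Basic
variable {Ω : Type*} [MeasurableSpace Ω]

lemma tvNorm_nonneg (μ : SignedMeasure Ω) : 0 ≤ tvNorm μ := ENNReal.toReal_nonneg

lemma sm_apply_eq (μ : SignedMeasure Ω) {A : Set Ω} (hA : MeasurableSet A) :
    μ A = (μ.toJordanDecomposition.posPart A).toReal
      - (μ.toJordanDecomposition.negPart A).toReal := by
  conv_lhs => rw [← μ.toSignedMeasure_toJordanDecomposition]
  rw [JordanDecomposition.toSignedMeasure, VectorMeasure.sub_apply,
    Measure.toSignedMeasure_apply_measurable hA, Measure.toSignedMeasure_apply_measurable hA]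
  rfl

instance tv_finite {Ω : Type*} [MeasurableSpace Ω] (μ : SignedMeasure Ω) : IsFiniteMeasure μ.totalVariation := by
  unfold SignedMeasure.totalVariation; infer_instance

lemma tv_apply_ne_top (μ : SignedMeasure Ω) (A : Set Ω) : μ.totalVariation A ≠ ⊤ :=
  measure_ne_top _ _

lemma abs_sm_apply_le_tv (μ : SignedMeasure Ω) {A : Set Ω} (hA : MeasurableSet A) :
    |μ A| ≤ (μ.totalVariation A).toReal := by
  rw [sm_apply_eq μ hA, SignedMeasure.totalVariation, Measure.add_apply,
    ENNReal.toReal_add (measure_ne_top _ _) (measure_ne_top _ _)]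
  have h1 : (0:ℝ) ≤ (μ.toJordanDecomposition.posPart A).toReal := ENNReal.toReal_nonneg
  have h2 : (0:ℝ) ≤ (μ.toJordanDecomposition.negPart A).toReal := ENNReal.toReal_nonneg
  rw [abs_sub_le_iff]; constructor <;> linarith

lemma abs_sm_apply_le_tvNorm (μ : SignedMeasure Ω) {A : Set Ω} (hA : MeasurableSet A) :
    |μ A| ≤ tvNorm μ := by
  refine (abs_sm_apply_le_tv μ hA).trans ?_
  exact ENNReal.toReal_mono (measure_ne_top _ _) (measure_mono (Set.subset_univ A))

lemma tvNorm_le_two_mul {μ : SignedMeasure Ω} {c : ℝ}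
    (h : ∀ A : Set Ω, MeasurableSet A → |μ A| ≤ c) : tvNorm μ ≤ 2 * c := by
  obtain ⟨s, hs, hpos, hneg⟩ := μ.toJordanDecomposition.mutuallySingular
  have hsc : MeasurableSet sᶜ := hs.compl
  have e1 : μ sᶜ = (μ.toJordanDecomposition.posPart sᶜ).toReal := by
    rw [sm_apply_eq μ hsc]
    have : μ.toJordanDecomposition.negPart sᶜ = 0 := hneg
    simp [this]
  have e2 : μ s = -(μ.toJordanDecomposition.negPart s).toReal := by
    rw [sm_apply_eq μ hs, hpos]; simp
  have hp : (μ.toJordanDecomposition.posPart Set.univ).toReal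
      = (μ.toJordanDecomposition.posPart sᶜ).toReal := by
    congr 1
    have := measure_add_measure_compl (μ := μ.toJordanDecomposition.posPart) hs
    rw [hpos, zero_add] at this
    exact this.symm
  have hn : (μ.toJordanDecomposition.negPart Set.univ).toReal
      = (μ.toJordanDecomposition.negPart s).toReal := by
    congr 1
    have := measure_add_measure_compl (μ := μ.toJordanDecomposition.negPart) hs
    rw [hneg, add_zero] at this
    exact this.symm
  have h1 := h sᶜ hsc
  have h2 := h s hs
  rw [e1, abs_of_nonneg ENNReal.toReal_nonneg] at h1
  rw [e2, abs_neg, abs_of_nonneg ENNReal.toReal_nonneg] at h2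
  rw [tvNorm, SignedMeasure.totalVariation, Measure.add_apply,
    ENNReal.toReal_add (measure_ne_top _ _) (measure_ne_top _ _), hp, hn]
  linarith

end Basic

section SIntLemmas
variable {Ω : Type*} [MeasurableSpace Ω]

lemma sm_apply_eq' (μ : SignedMeasure Ω) {A : Set Ω} (hA : MeasurableSet A) :
    μ A = (μ.toJordanDecomposition.posPart A).toReal
      - (μ.toJordanDecomposition.negPart A).toReal := by
  conv_lhs => rw [← μ.toSignedMeasure_toJordanDecomposition]
  rw [JordanDecomposition.toSignedMeasure, VectorMeasure.sub_apply,
    Measure.toSignedMeasure_apply_measurable hA, Measure.toSignedMeasure_apply_measurable hA]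
  rfl

lemma tvNorm_eq (μ : SignedMeasure Ω) :
    tvNorm μ = (μ.toJordanDecomposition.posPart Set.univ).toReal
      + (μ.toJordanDecomposition.negPart Set.univ).toReal := by
  rw [tvNorm, SignedMeasure.totalVariation, Measure.add_apply,
    ENNReal.toReal_add (measure_ne_top _ _) (measure_ne_top _ _)]

lemma integrable_of_bddmeas (ν : Measure Ω) [IsFiniteMeasure ν] {f : Ω → ℝ}
    (hf : IsBddMeas f) : Integrable f ν := by
  obtain ⟨hm, C, hC⟩ := hf
  exact (integrable_const C).mono' hm.aestronglyMeasurable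
    (Eventually.of_forall (fun x => by simpa [Real.norm_eq_abs] using hC x))

lemma sInt_add (μ : SignedMeasure Ω) {f g : Ω → ℝ} (hf : IsBddMeas f) (hg : IsBddMeas g) :
    sInt μ (fun x => f x + g x) = sInt μ f + sInt μ g := by
  unfold sInt
  rw [integral_add (integrable_of_bddmeas _ hf) (integrable_of_bddmeas _ hg),
    integral_add (integrable_of_bddmeas _ hf) (integrable_of_bddmeas _ hg)]
  ring

lemma sInt_sub (μ : SignedMeasure Ω) {f g : Ω → ℝ} (hf : IsBddMeas f) (hg : IsBddMeas g) :
    sInt μ (fun x => f x - g x) = sInt μ f - sInt μ g := by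
  unfold sInt
  rw [integral_sub (integrable_of_bddmeas _ hf) (integrable_of_bddmeas _ hg),
    integral_sub (integrable_of_bddmeas _ hf) (integrable_of_bddmeas _ hg)]
  ring

lemma sInt_const_mul (μ : SignedMeasure Ω) (c : ℝ) (f : Ω → ℝ) :
    sInt μ (fun x => c * f x) = c * sInt μ f := by
  unfold sInt
  rw [integral_const_mul, integral_const_mul]; ring

lemma sInt_indicator (μ : SignedMeasure Ω) {A : Set Ω} (hA : MeasurableSet A) :
    sInt μ (fun x => A.indicator (fun _ => (1:ℝ)) x) = μ A := by
  unfold sInt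
  rw [integral_indicator_const (1:ℝ) hA, integral_indicator_const (1:ℝ) hA,
    sm_apply_eq' μ hA]
  simp
  rfl

lemma sInt_finset_sum (μ : SignedMeasure Ω) {ι : Type*} (s : Finset ι) (F : ι → Ω → ℝ)
    (hF : ∀ j ∈ s, IsBddMeas (F j)) :
    sInt μ (fun x => ∑ j ∈ s, F j x) = ∑ j ∈ s, sInt μ (F j) := by
  unfold sInt
  rw [integral_finset_sum s (fun j hj => integrable_of_bddmeas _ (hF j hj)),
    integral_finset_sum s (fun j hj => integrable_of_bddmeas _ (hF j hj)),
    Finset.sum_sub_distrib]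

lemma sInt_abs_le (μ : SignedMeasure Ω) {f : Ω → ℝ} {M : ℝ}
    (hb : ∀ x, |f x| ≤ M) : |sInt μ f| ≤ M * tvNorm μ := by
  have h1 : ‖∫ x, f x ∂μ.toJordanDecomposition.posPart‖
      ≤ M * (μ.toJordanDecomposition.posPart Set.univ).toReal :=
    norm_integral_le_of_norm_le_const
      (Eventually.of_forall (fun x => by simpa [Real.norm_eq_abs] using hb x))
  have h2 : ‖∫ x, f x ∂μ.toJordanDecomposition.negPart‖
      ≤ M * (μ.toJordanDecomposition.negPart Set.univ).toReal :=
    norm_integral_le_of_norm_le_const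
      (Eventually.of_forall (fun x => by simpa [Real.norm_eq_abs] using hb x))
  rw [Real.norm_eq_abs] at h1 h2
  rw [tvNorm_eq]
  unfold sInt
  have h3 := abs_sub (∫ x, f x ∂μ.toJordanDecomposition.posPart)
    (∫ x, f x ∂μ.toJordanDecomposition.negPart)
  nlinarith [h3]

end SIntLemmas

section Approx
variable {Ω : Type*} [MeasurableSpace Ω]

lemma approx_step {f : Ω → ℝ} (hm : Measurable f) {M : ℝ} (hM : ∀ x, |f x| ≤ M)
    {η : ℝ} (hη : 0 < η) :
    ∃ (s : Finset ℤ) (B : ℤ → Set Ω), (∀ j, MeasurableSet (B j)) ∧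
      ∀ μ : SignedMeasure Ω,
        |sInt μ f - ∑ j ∈ s, ((j:ℝ) * η) * μ (B j)| ≤ η * tvNorm μ := by
  obtain ⟨J, hJ⟩ := exists_nat_ge (M / η + 1)
  set B : ℤ → Set Ω := fun j => f ⁻¹' Set.Ioc (((j:ℝ)-1)*η) ((j:ℝ)*η) with hBdef
  have hBmeas : ∀ j, MeasurableSet (B j) := fun j => hm measurableSet_Ioc
  set s : Finset ℤ := Finset.Icc (-(J:ℤ)) (J:ℤ) with hsdef
  set F : ℤ → Ω → ℝ := fun j x => ((j:ℝ)*η) * (B j).indicator (fun _ => (1:ℝ)) x with hFdef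
  have hindle : ∀ (j : ℤ) (x : Ω), |(B j).indicator (fun _ => (1:ℝ)) x| ≤ 1 := by
    intro j x
    by_cases hx : x ∈ B j <;> simp [Set.indicator, hx]
  have hFbm : ∀ j, IsBddMeas (F j) := by
    intro j
    refine ⟨(measurable_const.indicator (hBmeas j)).const_mul _, ⟨|(j:ℝ)*η|, fun x => ?_⟩⟩
    rw [hFdef, abs_mul, mul_comm]
    calc |(B j).indicator (fun _ => (1:ℝ)) x| * |(j:ℝ)*η| ≤ 1 * |(j:ℝ)*η| := by
          gcongr; exact hindle j x
    _ = |(j:ℝ)*η| := one_mul _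
  set g : Ω → ℝ := fun x => ∑ j ∈ s, F j x with hgdef
  have key : ∀ x, x ∈ B ⌈f x / η⌉ ∧ (⌈f x / η⌉ ∈ s) ∧ g x = (⌈f x / η⌉ : ℝ) * η := by
    intro x
    set j₀ : ℤ := ⌈f x / η⌉ with hj₀
    have h1 : f x / η ≤ (j₀:ℝ) := Int.le_ceil _
    have h2 : (j₀:ℝ) - 1 < f x / η := by
      have := Int.ceil_lt_add_one (f x / η)
      linarith
    have hmem : x ∈ B j₀ := by
      simp only [hBdef, Set.mem_preimage, Set.mem_Ioc]
      constructor
      · calc ((j₀:ℝ)-1)*η < (f x / η) * η := by gcongr ?_ * η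
        _ = f x := div_mul_cancel₀ _ (ne_of_gt hη)
      · calc f x = (f x / η) * η := (div_mul_cancel₀ _ (ne_of_gt hη)).symm
        _ ≤ (j₀:ℝ) * η := by gcongr ?_ * η
    have habs := abs_le.1 (hM x)
    have hup : (j₀:ℝ) ≤ (J:ℝ) := by
      have : (j₀:ℝ) < f x / η + 1 := by
        have := Int.ceil_lt_add_one (f x / η); exact_mod_cast this
      have hfd : f x / η ≤ M / η := by gcongr ?_ / η; exact habs.2
      linarith
    have hdn : -(J:ℝ) ≤ (j₀:ℝ) := by
      have hfd : -(M/η) ≤ f x / η := by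
        rw [← neg_div]; gcongr ?_ / η; exact habs.1
      have hM0 : 0 ≤ M := le_trans (abs_nonneg _) (hM x)
      have : (0:ℝ) ≤ M / η := by positivity
      linarith
    have hj₀s : j₀ ∈ s := by
      rw [hsdef, Finset.mem_Icc]
      constructor
      · exact_mod_cast (by exact_mod_cast hdn : ((-(J:ℤ) : ℤ):ℝ) ≤ (j₀:ℝ))
      · exact_mod_cast hup
    refine ⟨hmem, hj₀s, ?_⟩
    have hgx : g x = ∑ j ∈ s, F j x := rfl
    rw [hgx, Finset.sum_eq_single j₀]
    · simp [hFdef, Set.indicator_of_mem hmem]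
    · intro j hj hne
      have hxnot : x ∉ B j := by
        intro hxB
        apply hne
        simp only [hBdef, Set.mem_preimage, Set.mem_Ioc] at hxB
        have hle : f x / η ≤ (j:ℝ) := by
          rw [div_le_iff₀ hη]; exact hxB.2
        have hlt : (j:ℝ) - 1 < f x / η := by
          rw [lt_div_iff₀ hη]; exact hxB.1
        have : ⌈f x / η⌉ = j := by
          rw [Int.ceil_eq_iff]; constructor
          · exact_mod_cast hlt
          · exact hle
        rw [← this]
      simp [hFdef, Set.indicator_of_notMem hxnot]
    · intro hns; exact absurd hj₀s hns
  have hfg : ∀ x, |f x - g x| ≤ η := by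
    intro x
    obtain ⟨hmem, -, hgx⟩ := key x
    simp only [hBdef, Set.mem_preimage, Set.mem_Ioc] at hmem
    rw [hgx, abs_le]
    constructor <;> nlinarith [hmem.1, hmem.2]
  have hgbm : IsBddMeas g := by
    constructor
    · exact Finset.measurable_sum s (fun j _ => (hFbm j).1)
    · refine ⟨M + η, fun x => ?_⟩
      have := hfg x
      have := hM x
      have h1 := abs_le.1 (hfg x)
      have h2 := abs_le.1 (hM x)
      rw [abs_le]; constructor <;> linarith
  refine ⟨s, B, hBmeas, fun μ => ?_⟩
  have hsg : sInt μ g = ∑ j ∈ s, ((j:ℝ) * η) * μ (B j) := by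
    have hgeq : sInt μ g = sInt μ (fun x => ∑ j ∈ s, F j x) := rfl
    rw [hgeq, sInt_finset_sum μ s F (fun j _ => hFbm j)]
    refine Finset.sum_congr rfl (fun j _ => ?_)
    have : sInt μ (F j) = sInt μ (fun x => ((j:ℝ)*η) * (B j).indicator (fun _ => (1:ℝ)) x) := rfl
    rw [this, sInt_const_mul, sInt_indicator μ (hBmeas j)]
  rw [← hsg]
  have hsub : sInt μ f - sInt μ g = sInt μ (fun x => f x - g x) :=
    (sInt_sub μ ⟨hm, M, hM⟩ hgbm).symm
  rw [hsub]
  have := sInt_abs_le μ (f := fun x => f x - g x) (M := η) hfg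
  linarith [this, tvNorm_nonneg μ]

end Approx

section Conv
variable {Ω : Type*} [MeasurableSpace Ω]

lemma measurable_sInt {k : Ω → SignedMeasure Ω}
    (hk1 : ∀ A : Set Ω, MeasurableSet A → Measurable fun x => k x A)
    {C : ℝ} (hk2 : ∀ x, tvNorm (k x) ≤ C) {f : Ω → ℝ} (hf : IsBddMeas f) :
    Measurable fun x => sInt (k x) f := by
  obtain ⟨hm, M, hM⟩ := hf
  have happ := fun m : ℕ => approx_step hm hM (η := 1/(m+1))
    (by positivity)
  choose s B hBmeas hbound using happ
  apply measurable_of_tendsto_metrizable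
    (f := fun m x => ∑ j ∈ s m, ((j:ℝ)*(1/(m+1))) * (k x) (B m j))
  · intro m
    exact Finset.measurable_sum _ fun j _ => ((hk1 _ (hBmeas m j)).const_mul _)
  · rw [tendsto_pi_nhds]
    intro x
    have hC0 : 0 ≤ C := le_trans (tvNorm_nonneg (k x)) (hk2 x)
    have hb2 : ∀ m : ℕ, ‖(∑ j ∈ s m, ((j:ℝ)*(1/(m+1))) * (k x) (B m j)) - sInt (k x) f‖
        ≤ (1/(m+1:ℝ)) * C := by
      intro m
      rw [Real.norm_eq_abs, abs_sub_comm]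
      refine (hbound m (k x)).trans ?_
      have h0 : (0:ℝ) ≤ 1/(m+1:ℝ) := by positivity
      exact mul_le_mul_of_nonneg_left (hk2 x) h0
    have hten : Tendsto (fun m : ℕ => (1/(m+1:ℝ)) * C) atTop (𝓝 0) := by
      simpa using tendsto_one_div_add_atTop_nhds_zero_nat.mul_const C
    rw [← tendsto_sub_nhds_zero_iff]
    exact squeeze_zero_norm hb2 hten

lemma sInt_tendsto_of_setwise {ν : ℕ → SignedMeasure Ω} {ν' : SignedMeasure Ω} {C : ℝ}
    (hC : ∀ n, tvNorm (ν n) ≤ C) (hC' : tvNorm ν' ≤ C)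
    (hconv : ∀ A : Set Ω, MeasurableSet A → Tendsto (fun n => ν n A) atTop (𝓝 (ν' A)))
    {f : Ω → ℝ} (hf : IsBddMeas f) :
    Tendsto (fun n => sInt (ν n) f) atTop (𝓝 (sInt ν' f)) := by
  obtain ⟨hm, M, hM⟩ := hf
  rw [Metric.tendsto_atTop]
  intro ε hε
  have hC0 : 0 ≤ C := le_trans (tvNorm_nonneg (ν 0)) (hC 0)
  set η := ε / (4*(C+1)) with hηdef
  have hη : 0 < η := by positivity
  obtain ⟨s, B, hBmeas, hbound⟩ := approx_step hm hM hη
  have htend : Tendsto (fun n => ∑ j ∈ s, ((j:ℝ)*η) * (ν n) (B j)) atTop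
      (𝓝 (∑ j ∈ s, ((j:ℝ)*η) * ν' (B j))) :=
    tendsto_finset_sum _ fun j _ => ((hconv _ (hBmeas j)).const_mul _)
  rw [Metric.tendsto_atTop] at htend
  obtain ⟨N, hN⟩ := htend (ε/4) (by positivity)
  refine ⟨N, fun n hn => ?_⟩
  have h1 := hbound (ν n)
  have h2 := hbound ν'
  have h3 := hN n hn
  rw [Real.dist_eq] at h3 ⊢
  have hb1 : η * tvNorm (ν n) ≤ ε/4 := by
    calc η * tvNorm (ν n) ≤ η * C := by gcongr; exact hC n
    _ ≤ (ε / (4*(C+1))) * (C+1) := by rw [hηdef]; gcongr <;> linarith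
    _ = ε/4 := by field_simp
  have hb2 : η * tvNorm ν' ≤ ε/4 := by
    calc η * tvNorm ν' ≤ η * C := by gcongr
    _ ≤ (ε / (4*(C+1))) * (C+1) := by rw [hηdef]; gcongr <;> linarith
    _ = ε/4 := by field_simp
  have e1 : |sInt (ν n) f - ∑ j ∈ s, ((j:ℝ)*η) * (ν n) (B j)| ≤ ε/4 := le_trans h1 hb1
  have e2 : |sInt ν' f - ∑ j ∈ s, ((j:ℝ)*η) * ν' (B j)| ≤ ε/4 := le_trans h2 hb2
  have t1 := abs_sub_le (sInt (ν n) f) (∑ j ∈ s, ((j:ℝ)*η) * (ν n) (B j)) (sInt ν' f)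
  have t2 := abs_sub_le (∑ j ∈ s, ((j:ℝ)*η) * (ν n) (B j)) (∑ j ∈ s, ((j:ℝ)*η) * ν' (B j))
    (sInt ν' f)
  have e2' : |(∑ j ∈ s, ((j:ℝ)*η) * ν' (B j)) - sInt ν' f| ≤ ε/4 := by
    rw [abs_sub_comm]; exact e2
  linarith

lemma sInt_tendsto_dominated (μ : SignedMeasure Ω) {g : ℕ → Ω → ℝ} {G : Ω → ℝ} {C : ℝ}
    (hgm : ∀ n, Measurable (g n))
    (hb : ∀ n x, |g n x| ≤ C)
    (hpt : ∀ x, Tendsto (fun n => g n x) atTop (𝓝 (G x))) :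
    Tendsto (fun n => sInt μ (g n)) atTop (𝓝 (sInt μ G)) := by
  unfold sInt
  apply Tendsto.sub <;>
    exact tendsto_integral_of_dominated_convergence (fun _ => C)
      (fun n => (hgm n).aestronglyMeasurable) (integrable_const C)
      (fun n => Eventually.of_forall fun x => by simpa [Real.norm_eq_abs] using hb n x)
      (Eventually.of_forall hpt)

end Conv

section Nikodym
variable {Ω : Type*} [MeasurableSpace Ω]

lemma sm_diff_bound (μ : SignedMeasure Ω) {A B : Set Ω}
    (hA : MeasurableSet A) (hB : MeasurableSet B) :
    |μ A - μ B| ≤ (μ.totalVariation (symmDiff A B)).toReal := by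
  have h1 : μ A = μ (A ∩ B) + μ (A \ B) := by
    rw [← VectorMeasure.of_union (Set.disjoint_of_subset_left Set.inter_subset_right
      disjoint_sdiff_self_right) (hA.inter hB) (hA.diff hB)]
    congr 1
    rw [Set.inter_union_diff]
  have h2 : μ B = μ (B ∩ A) + μ (B \ A) := by
    rw [← VectorMeasure.of_union (Set.disjoint_of_subset_left Set.inter_subset_right
      disjoint_sdiff_self_right) (hB.inter hA) (hB.diff hA)]
    congr 1
    rw [Set.inter_union_diff]
  have h3 : μ (A ∩ B) = μ (B ∩ A) := by rw [Set.inter_comm]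
  have e : μ A - μ B = μ (A \ B) - μ (B \ A) := by rw [h1, h2, h3]; ring
  rw [e]
  have hd : symmDiff A B = (A \ B) ∪ (B \ A) := by
    rw [Set.symmDiff_def]
  have hdisj : Disjoint (A \ B) (B \ A) :=
    Set.disjoint_of_subset_left Set.diff_subset disjoint_sdiff_self_right
  have hmeas : μ.totalVariation (symmDiff A B)
      = μ.totalVariation (A \ B) + μ.totalVariation (B \ A) := by
    rw [hd, measure_union hdisj (hB.diff hA)]
  rw [hmeas, ENNReal.toReal_add (measure_ne_top _ _) (measure_ne_top _ _)]
  have b1 := abs_sm_apply_le_tv μ (hA.diff hB)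
  have b2 := abs_sm_apply_le_tv μ (hB.diff hA)
  have := abs_sub (μ (A \ B)) (μ (B \ A))
  linarith

lemma abscont {lam ν : Measure Ω} [IsFiniteMeasure lam] [IsFiniteMeasure ν]
    (h : ∀ s : Set Ω, lam s = 0 → ν s = 0) :
    ∀ ε : ℝ, 0 < ε → ∃ δ : ℝ, 0 < δ ∧
      ∀ s : Set Ω, MeasurableSet s → (lam s).toReal < δ → (ν s).toReal < ε := by
  by_contra hcon
  push_neg at hcon
  obtain ⟨ε, hε, hfor⟩ := hcon
  choose sfun hs1 hs2 hs3 using fun k : ℕ => hfor ((1/2)^k) (by positivity)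
  set B : Set Ω := ⋂ m, ⋃ k, sfun (m + k) with hBdef
  have hDmeas : ∀ m : ℕ, MeasurableSet (⋃ k, sfun (m + k)) :=
    fun m => MeasurableSet.iUnion (fun k => hs1 (m + k))
  have hBmeas : MeasurableSet B := MeasurableSet.iInter hDmeas
  have hgeo : ∀ m : ℕ, lam (⋃ k, sfun (m + k)) ≤ ENNReal.ofReal (2 * (1/2)^m) := by
    intro m
    calc lam (⋃ k, sfun (m + k)) ≤ ∑' k, lam (sfun (m + k)) := measure_iUnion_le _
    _ ≤ ∑' k, ENNReal.ofReal ((1/2)^(m+k)) := by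
        refine ENNReal.tsum_le_tsum (fun k => ?_)
        have hfin : lam (sfun (m+k)) ≠ ⊤ := measure_ne_top _ _
        rw [← ENNReal.ofReal_toReal hfin]
        exact ENNReal.ofReal_le_ofReal (le_of_lt (hs2 (m+k)))
    _ = ENNReal.ofReal (∑' k, (1/2:ℝ)^(m+k)) := by
        rw [ENNReal.ofReal_tsum_of_nonneg (fun k => by positivity)]
        exact (summable_geometric_of_lt_one (by norm_num) (by norm_num)).comp_injective
          (add_right_injective m)
    _ = ENNReal.ofReal (2 * (1/2)^m) := by
        congr 1
        have : ∀ k : ℕ, (1/2:ℝ)^(m+k) = (1/2)^m * (1/2)^k := fun k => pow_add _ _ _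
        rw [tsum_congr this, tsum_mul_left, tsum_geometric_two]
        ring
  have hlamB : lam B = 0 := by
    have hle : ∀ m : ℕ, (lam B).toReal ≤ 2 * (1/2)^m := by
      intro m
      have h1 : lam B ≤ lam (⋃ k, sfun (m + k)) :=
        measure_mono (Set.iInter_subset _ m)
      have h2 := h1.trans (hgeo m)
      calc (lam B).toReal ≤ (ENNReal.ofReal (2 * (1/2)^m)).toReal :=
            ENNReal.toReal_mono ENNReal.ofReal_ne_top h2
      _ ≤ 2 * (1/2)^m := by
            rw [ENNReal.toReal_ofReal (by positivity)]
    have htend : Tendsto (fun m : ℕ => 2 * (1/2:ℝ)^m) atTop (𝓝 0) := by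
      simpa using (tendsto_pow_atTop_nhds_zero_of_lt_one (by norm_num : (0:ℝ) ≤ 1/2)
        (by norm_num : (1/2:ℝ) < 1)).const_mul 2
    have h0 : (lam B).toReal ≤ 0 :=
      ge_of_tendsto htend (Eventually.of_forall hle)
    have : (lam B).toReal = 0 := le_antisymm h0 ENNReal.toReal_nonneg
    exact (ENNReal.toReal_eq_zero_iff _).1 this |>.resolve_right (measure_ne_top _ _)
  have hν0 : ν B = 0 := h B hlamB
  have hεB : ε ≤ (ν B).toReal := by
    have hanti : Antitone (fun m : ℕ => ⋃ k, sfun (m + k)) := by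
      intro m m' hmm'
      refine Set.iUnion_subset (fun k => ?_)
      have : m' + k = m + (m' + k - m) := by omega
      rw [this]
      exact Set.subset_iUnion (fun k => sfun (m + k)) _
    have htd : Tendsto (fun m : ℕ => ν (⋃ k, sfun (m + k))) atTop (𝓝 (ν B)) :=
      tendsto_measure_iInter_atTop (fun m => (hDmeas m).nullMeasurableSet) hanti
        ⟨0, measure_ne_top _ _⟩
    have htd' : Tendsto (fun m : ℕ => (ν (⋃ k, sfun (m + k))).toReal) atTop
        (𝓝 (ν B).toReal) :=
      (ENNReal.tendsto_toReal (measure_ne_top _ _)).comp htd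
    refine ge_of_tendsto htd' (Eventually.of_forall (fun m => ?_))
    have hsub : sfun (m + 0) ⊆ ⋃ k, sfun (m + k) := Set.subset_iUnion (fun k => sfun (m + k)) 0
    have := hs3 (m + 0)
    calc ε ≤ (ν (sfun (m + 0))).toReal := this
    _ ≤ (ν (⋃ k, sfun (m + k))).toReal :=
        ENNReal.toReal_mono (measure_ne_top _ _) (measure_mono hsub)
  rw [hν0] at hεB
  simp at hεB
  linarith

end Nikodym

section MSetSpace
variable {Ω : Type*} [MeasurableSpace Ω]

/-- The type of measurable sets, with pseudometric `λ(A ∆ B)`. -/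
def MSet (lam : Measure Ω) := { A : Set Ω // MeasurableSet A }

noncomputable instance MSet.instPMS (lam : Measure Ω) [IsFiniteMeasure lam] :
    PseudoMetricSpace (MSet lam) where
  dist a b := (lam (symmDiff a.1 b.1)).toReal
  dist_self a := by simp [symmDiff_self]
  dist_comm a b := by simp only [symmDiff_comm]
  dist_triangle a b c := by
    have h1 : lam (symmDiff a.1 c.1) ≤ lam (symmDiff a.1 b.1) + lam (symmDiff b.1 c.1) :=
      le_trans (measure_mono (symmDiff_triangle a.1 b.1 c.1)) (measure_union_le _ _)
    calc (lam (symmDiff a.1 c.1)).toReal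
        ≤ (lam (symmDiff a.1 b.1) + lam (symmDiff b.1 c.1)).toReal :=
          ENNReal.toReal_mono (by
            exact ENNReal.add_ne_top.2 ⟨measure_ne_top _ _, measure_ne_top _ _⟩) h1
    _ = _ := ENNReal.toReal_add (measure_ne_top _ _) (measure_ne_top _ _)

lemma MSet.dist_eq {lam : Measure Ω} [IsFiniteMeasure lam] (a b : MSet lam) :
    dist a b = (lam (symmDiff a.1 b.1)).toReal := rfl

instance MSet.instComplete (lam : Measure Ω) [IsFiniteMeasure lam] :
    CompleteSpace (MSet lam) := by
  apply Metric.complete_of_convergent_controlled_sequences (fun n => (1/2:ℝ)^n)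
    (fun n => by positivity)
  intro u hu
  set A : Set Ω := ⋃ m, ⋂ k, (u (m + k)).1 with hAdef
  have hAmeas : MeasurableSet A :=
    MeasurableSet.iUnion (fun m => MeasurableSet.iInter (fun k => (u (m + k)).2))
  refine ⟨⟨A, hAmeas⟩, ?_⟩
  have hstep : ∀ j : ℕ, lam (symmDiff (u j).1 A)
      ≤ ENNReal.ofReal (2 * (1/2:ℝ)^j) := by
    intro j
    have hincl : symmDiff (u j).1 A ⊆ ⋃ i : ℕ, symmDiff (u (j + i)).1 (u (j + i + 1)).1 := by
      intro x hx
      by_contra hnot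
      rw [Set.mem_iUnion] at hnot
      push_neg at hnot
      have hiff : ∀ i : ℕ, (x ∈ (u (j + i)).1 ↔ x ∈ (u (j + i + 1)).1) := by
        intro i
        have := hnot i
        rw [Set.mem_symmDiff] at this
        tauto
      have hconst : ∀ i : ℕ, (x ∈ (u (j + i)).1 ↔ x ∈ (u j).1) := by
        intro i
        induction i with
        | zero => rfl
        | succ n ih => rw [show j + (n+1) = j + n + 1 from rfl, ← hiff n]; exact ih
      rw [Set.mem_symmDiff] at hx
      rcases hx with ⟨hxj, hxA⟩ | ⟨hxA, hxj⟩
      · exact hxA (Set.mem_iUnion.2 ⟨j, Set.mem_iInter.2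
          (fun k => (hconst k).2 hxj)⟩)
      · rw [hAdef, Set.mem_iUnion] at hxA
        obtain ⟨m, hm⟩ := hxA
        rw [Set.mem_iInter] at hm
        have hxm : x ∈ (u (m + j)).1 := hm j
        have : x ∈ (u (j + m)).1 := by rwa [add_comm m j] at hxm
        exact hxj ((hconst m).1 this)
    calc lam (symmDiff (u j).1 A)
        ≤ lam (⋃ i : ℕ, symmDiff (u (j + i)).1 (u (j + i + 1)).1) := measure_mono hincl
    _ ≤ ∑' i, lam (symmDiff (u (j + i)).1 (u (j + i + 1)).1) := measure_iUnion_le _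
    _ ≤ ∑' i, ENNReal.ofReal ((1/2:ℝ)^(j+i)) := by
        refine ENNReal.tsum_le_tsum (fun i => ?_)
        have hd := hu (j + i) (j + i) (j + i + 1) (le_refl _) (Nat.le_succ _)
        rw [MSet.dist_eq] at hd
        have hfin : lam (symmDiff (u (j+i)).1 (u (j+i+1)).1) ≠ ⊤ := measure_ne_top _ _
        rw [← ENNReal.ofReal_toReal hfin]
        exact ENNReal.ofReal_le_ofReal (le_of_lt hd)
    _ = ENNReal.ofReal (∑' i, (1/2:ℝ)^(j+i)) := by
        rw [ENNReal.ofReal_tsum_of_nonneg (fun i => by positivity)]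
        exact (summable_geometric_of_lt_one (by norm_num) (by norm_num)).comp_injective
          (add_right_injective j)
    _ = ENNReal.ofReal (2 * (1/2:ℝ)^j) := by
        congr 1
        have : ∀ i : ℕ, (1/2:ℝ)^(j+i) = (1/2)^j * (1/2)^i := fun i => pow_add _ _ _
        rw [tsum_congr this, tsum_mul_left, tsum_geometric_two]
        ring
  apply tendsto_iff_dist_tendsto_zero.2
  apply squeeze_zero (fun j => dist_nonneg) (g := fun j => 2 * (1/2:ℝ)^j)
  · intro j
    refine (MSet.dist_eq (u j) ⟨A, hAmeas⟩).trans_le ?_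
    calc (lam (symmDiff (u j).1 A)).toReal
        ≤ (ENNReal.ofReal (2 * (1/2:ℝ)^j)).toReal :=
          ENNReal.toReal_mono ENNReal.ofReal_ne_top (hstep j)
    _ = 2 * (1/2:ℝ)^j := ENNReal.toReal_ofReal (by positivity)
  · simpa using (tendsto_pow_atTop_nhds_zero_of_lt_one (by norm_num : (0:ℝ) ≤ 1/2)
      (by norm_num : (1/2:ℝ) < 1)).const_mul 2

end MSetSpace

section VHS
variable {Ω : Type*} [MeasurableSpace Ω]

lemma uniform_small (μ : ℕ → SignedMeasure Ω) (lam : Measure Ω) [IsFiniteMeasure lam]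
    (habs : ∀ n, ∀ s : Set Ω, lam s = 0 → (μ n).totalVariation s = 0)
    (hcv : ∀ A : Set Ω, MeasurableSet A → ∃ l, Tendsto (fun n => μ n A) atTop (𝓝 l))
    {ε : ℝ} (hε : 0 < ε) :
    ∃ (m₀ : ℕ) (δ : ℝ), 0 < δ ∧ ∀ p q : ℕ, m₀ ≤ p → m₀ ≤ q →
      ∀ D : Set Ω, MeasurableSet D → (lam D).toReal < δ → |μ p D - μ q D| ≤ 2 * ε := by
  set φ : ℕ → MSet lam → ℝ := fun n a => μ n a.1 with hφdef
  have hφcont : ∀ n, Continuous (φ n) := by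
    intro n
    rw [Metric.continuous_iff]
    intro a ε' hε'
    obtain ⟨δ, hδ, hδ'⟩ := abscont (ν := (μ n).totalVariation) (habs n) ε' hε'
    refine ⟨δ, hδ, fun b hb => ?_⟩
    rw [Real.dist_eq]
    rw [MSet.dist_eq] at hb
    calc |μ n b.1 - μ n a.1| ≤ ((μ n).totalVariation (symmDiff b.1 a.1)).toReal :=
          sm_diff_bound (μ n) b.2 a.2
    _ < ε' := hδ' _ (b.2.symmDiff a.2) hb
  set F : ℕ → Set (MSet lam) := fun m =>
    ⋂ (p : ℕ) (q : ℕ) (_ : m ≤ p) (_ : m ≤ q), {a : MSet lam | |φ p a - φ q a| ≤ ε}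
    with hFdef
  have hFclosed : ∀ m, IsClosed (F m) := by
    intro m
    refine isClosed_iInter (fun p => isClosed_iInter (fun q =>
      isClosed_iInter (fun _ => isClosed_iInter (fun _ => ?_))))
    have : {a : MSet lam | |φ p a - φ q a| ≤ ε}
        = (fun a => |φ p a - φ q a|) ⁻¹' (Set.Iic ε) := rfl
    rw [this]
    exact IsClosed.preimage (((hφcont p).sub (hφcont q)).abs) isClosed_Iic
  have hFcover : ⋃ m, F m = Set.univ := by
    rw [Set.eq_univ_iff_forall]
    intro a
    obtain ⟨l, hl⟩ := hcv a.1 a.2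
    rw [Metric.tendsto_atTop] at hl
    obtain ⟨N, hN⟩ := hl (ε/2) (by positivity)
    refine Set.mem_iUnion.2 ⟨N, ?_⟩
    rw [hFdef]
    simp only [Set.mem_iInter, Set.mem_setOf_eq]
    intro p q hp hq
    have h1 := hN p hp
    have h2 := hN q hq
    rw [Real.dist_eq] at h1 h2
    have : φ p a - φ q a = (μ p a.1 - l) - (μ q a.1 - l) := by rw [hφdef]; ring
    rw [this]
    have := abs_sub (μ p a.1 - l) (μ q a.1 - l)
    linarith
  have : Nonempty (MSet lam) := ⟨⟨∅, MeasurableSet.empty⟩⟩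
  obtain ⟨m₀, a₀, ha₀⟩ := nonempty_interior_of_iUnion_of_closed hFclosed hFcover
  obtain ⟨δ, hδpos, hball⟩ := Metric.isOpen_iff.1 isOpen_interior a₀ ha₀
  have hballF : Metric.ball a₀ δ ⊆ F m₀ := hball.trans interior_subset
  refine ⟨m₀, δ, hδpos, fun p q hp hq D hD hDsmall => ?_⟩
  set a₁ : MSet lam := ⟨a₀.1 ∪ D, a₀.2.union hD⟩ with ha₁
  set a₂ : MSet lam := ⟨a₀.1 \ D, a₀.2.diff hD⟩ with ha₂
  have hd1 : dist a₁ a₀ < δ := by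
    rw [MSet.dist_eq]
    have hsub : symmDiff a₁.1 a₀.1 ⊆ D := by
      intro x hx
      rw [Set.mem_symmDiff] at hx
      rcases hx with ⟨hx1, hx2⟩ | ⟨hx1, hx2⟩
      · rcases hx1 with h | h
        · exact absurd h hx2
        · exact h
      · exact absurd (Or.inl hx1) hx2
    calc (lam (symmDiff a₁.1 a₀.1)).toReal ≤ (lam D).toReal :=
          ENNReal.toReal_mono (measure_ne_top _ _) (measure_mono hsub)
    _ < δ := hDsmall
  have hd2 : dist a₂ a₀ < δ := by
    rw [MSet.dist_eq]
    have hsub : symmDiff a₂.1 a₀.1 ⊆ D := by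
      intro x hx
      rw [Set.mem_symmDiff] at hx
      rcases hx with ⟨hx1, hx2⟩ | ⟨hx1, hx2⟩
      · exact absurd hx1.1 (by intro h; exact hx2 h)
      · by_contra hnot
        exact hx2 ⟨hx1, hnot⟩
    calc (lam (symmDiff a₂.1 a₀.1)).toReal ≤ (lam D).toReal :=
          ENNReal.toReal_mono (measure_ne_top _ _) (measure_mono hsub)
    _ < δ := hDsmall
  have hm1 : a₁ ∈ F m₀ := hballF (Metric.mem_ball.2 hd1)
  have hm2 : a₂ ∈ F m₀ := hballF (Metric.mem_ball.2 hd2)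
  rw [hFdef] at hm1 hm2
  simp only [Set.mem_iInter, Set.mem_setOf_eq] at hm1 hm2
  have h1 := hm1 p q hp hq
  have h2 := hm2 p q hp hq
  have hsplit : ∀ n : ℕ, μ n (a₀.1 ∪ D) = μ n (a₀.1 \ D) + μ n D := by
    intro n
    rw [← VectorMeasure.of_union disjoint_sdiff_self_left (a₀.2.diff hD) hD,
      Set.diff_union_self]
  have e1 : μ p D = φ p a₁ - φ p a₂ := by
    rw [hφdef]
    simp only [ha₁, ha₂]
    rw [hsplit p]; ring
  have e2 : μ q D = φ q a₁ - φ q a₂ := by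
    rw [hφdef]
    simp only [ha₁, ha₂]
    rw [hsplit q]; ring
  rw [e1, e2]
  have : φ p a₁ - φ p a₂ - (φ q a₁ - φ q a₂)
      = (φ p a₁ - φ q a₁) - (φ p a₂ - φ q a₂) := by ring
  rw [this]
  have := abs_sub (φ p a₁ - φ q a₁) (φ p a₂ - φ q a₂)
  linarith

lemma nikodym_zero {μ : ℕ → SignedMeasure Ω} {C : ℝ} (hC : ∀ n, tvNorm (μ n) ≤ C)
    (hcv : ∀ A : Set Ω, MeasurableSet A → ∃ l, Tendsto (fun n => μ n A) atTop (𝓝 l))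
    {B : ℕ → Set Ω} (hBmeas : ∀ j, MeasurableSet (B j)) (hBanti : Antitone B)
    (hBempty : ⋂ j, B j = ∅) {l : ℕ → ℝ}
    (hl : ∀ j, Tendsto (fun n => μ n (B j)) atTop (𝓝 (l j))) :
    Tendsto l atTop (𝓝 0) := by
  -- construct the dominating finite measure
  set lam : Measure Ω :=
    Measure.sum (fun n => ((2:ℝ≥0∞)⁻¹)^(n+1) • (μ n).totalVariation) with hlamdef
  have hC0 : 0 ≤ C := le_trans (tvNorm_nonneg (μ 0)) (hC 0)
  have hlamfin : IsFiniteMeasure lam := by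
    constructor
    rw [hlamdef, Measure.sum_apply _ MeasurableSet.univ]
    calc ∑' n, (((2:ℝ≥0∞)⁻¹)^(n+1) • (μ n).totalVariation) Set.univ
        ≤ ∑' n, ((2:ℝ≥0∞)⁻¹)^(n+1) * ENNReal.ofReal C := by
          refine ENNReal.tsum_le_tsum (fun n => ?_)
          rw [Measure.smul_apply, smul_eq_mul]
          refine mul_le_mul_right ?_ _
          have hfin : (μ n).totalVariation Set.univ ≠ ⊤ := measure_ne_top _ _
          rw [← ENNReal.ofReal_toReal hfin]
          exact ENNReal.ofReal_le_ofReal (hC n)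
    _ = (∑' n, ((2:ℝ≥0∞)⁻¹)^(n+1)) * ENNReal.ofReal C := ENNReal.tsum_mul_right
    _ ≤ (∑' n : ℕ, ((2:ℝ≥0∞)⁻¹)^n) * ENNReal.ofReal C := by
          refine mul_le_mul_left (ENNReal.tsum_le_tsum (fun n => ?_)) _
          exact pow_le_pow_of_le_one (by norm_num) (by norm_num) (Nat.le_succ n)
    _ < ⊤ := by
          rw [ENNReal.tsum_geometric]
          refine ENNReal.mul_lt_top ?_ ENNReal.ofReal_lt_top
          simp [ENNReal.sub_half]
  have habs : ∀ n, ∀ s : Set Ω, lam s = 0 → (μ n).totalVariation s = 0 := by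
    intro n s hs
    have hle := Measure.le_iff'.1 (Measure.le_sum
      (fun n => ((2:ℝ≥0∞)⁻¹)^(n+1) • (μ n).totalVariation) n) s
    rw [hlamdef] at hs
    rw [hs] at hle
    rw [Measure.smul_apply, smul_eq_mul] at hle
    have h2 : ((2:ℝ≥0∞)⁻¹)^(n+1) ≠ 0 := by
      apply pow_ne_zero; simp
    have := le_antisymm hle zero_le
    exact (mul_eq_zero.1 this).resolve_left h2
  rw [NormedAddCommGroup.tendsto_nhds_zero]
  intro ε hε
  obtain ⟨m₀, δ, hδpos, hunif⟩ := uniform_small μ lam habs hcv (ε := ε/4) (by positivity)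
  -- lam (B j) → 0 and totalVariation (μ m₀) (B j) → 0
  have hlamB : Tendsto (fun j => (lam (B j)).toReal) atTop (𝓝 0) := by
    have h1 : Tendsto (fun j => lam (B j)) atTop (𝓝 (lam (⋂ j, B j))) :=
      tendsto_measure_iInter_atTop (fun j => (hBmeas j).nullMeasurableSet) hBanti
        ⟨0, measure_ne_top _ _⟩
    rw [hBempty] at h1
    simp only [measure_empty] at h1
    have := (ENNReal.tendsto_toReal (by simp : (0:ℝ≥0∞) ≠ ⊤)).comp h1
    simpa [Function.comp_def] using this
  have htvB : Tendsto (fun j => ((μ m₀).totalVariation (B j)).toReal) atTop (𝓝 0) := by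
    have h1 : Tendsto (fun j => (μ m₀).totalVariation (B j)) atTop
        (𝓝 ((μ m₀).totalVariation (⋂ j, B j))) :=
      tendsto_measure_iInter_atTop (fun j => (hBmeas j).nullMeasurableSet) hBanti
        ⟨0, measure_ne_top _ _⟩
    rw [hBempty] at h1
    simp only [measure_empty] at h1
    have := (ENNReal.tendsto_toReal (by simp : (0:ℝ≥0∞) ≠ ⊤)).comp h1
    simpa [Function.comp_def] using this
  rw [Metric.tendsto_atTop] at hlamB htvB
  obtain ⟨N1, hN1⟩ := hlamB δ hδpos
  obtain ⟨N2, hN2⟩ := htvB (ε/4) (by positivity)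
  filter_upwards [eventually_ge_atTop N1, eventually_ge_atTop N2] with j hj1 hj2
  have hlamj : (lam (B j)).toReal < δ := by
    have := hN1 j hj1
    rw [Real.dist_eq, sub_zero] at this
    exact lt_of_abs_lt this
  have htvj : ((μ m₀).totalVariation (B j)).toReal < ε/4 := by
    have := hN2 j hj2
    rw [Real.dist_eq, sub_zero] at this
    exact lt_of_abs_lt this
  have hm₀j : |μ m₀ (B j)| < ε/4 :=
    lt_of_le_of_lt (abs_sm_apply_le_tv (μ m₀) (hBmeas j)) htvj
  have hbound : ∀ p : ℕ, m₀ ≤ p → |μ p (B j)| ≤ 2*(ε/4) + ε/4 := by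
    intro p hp
    have h1 := hunif p m₀ hp (le_refl m₀) (B j) (hBmeas j) hlamj
    have := abs_sub (μ p (B j) - μ m₀ (B j)) (- μ m₀ (B j))
    have habs2 : |μ p (B j)| ≤ |μ p (B j) - μ m₀ (B j)| + |μ m₀ (B j)| := by
      have := abs_add_le (μ p (B j) - μ m₀ (B j)) (μ m₀ (B j))
      simpa using this
    linarith
  have hlj : |l j| ≤ 2*(ε/4) + ε/4 := by
    have habsl : Tendsto (fun p => |μ p (B j)|) atTop (𝓝 |l j|) := (hl j).abs
    exact le_of_tendsto habsl (eventually_atTop.2 ⟨m₀, hbound⟩)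
  rw [Real.norm_eq_abs]
  calc |l j| ≤ 2*(ε/4) + ε/4 := hlj
  _ < ε := by linarith

end VHS

section LimitMeasure
variable {Ω : Type*} [MeasurableSpace Ω]

lemma exists_limit_sm (μ : ℕ → SignedMeasure Ω) {C : ℝ} (hC : ∀ n, tvNorm (μ n) ≤ C)
    (hcv : ∀ A : Set Ω, MeasurableSet A → ∃ l, Tendsto (fun n => μ n A) atTop (𝓝 l)) :
    ∃ ν : SignedMeasure Ω, ∀ A : Set Ω, MeasurableSet A →
      Tendsto (fun n => μ n A) atTop (𝓝 (ν A)) := by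
  classical
  choose L hL using hcv
  set m : Set Ω → ℝ := fun A => if h : MeasurableSet A then L A h else 0 with hmdef
  have hmten : ∀ (A : Set Ω), MeasurableSet A →
      Tendsto (fun n => μ n A) atTop (𝓝 (m A)) := by
    intro A hA
    have : m A = L A hA := by rw [hmdef]; simp only [dif_pos hA]
    rw [this]
    exact hL A hA
  have hempty : m ∅ = 0 := by
    refine tendsto_nhds_unique (hmten ∅ MeasurableSet.empty) ?_
    have : ∀ n : ℕ, μ n (∅ : Set Ω) = 0 := fun n => (μ n).empty
    simp only [this]
    exact tendsto_const_nhds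
  have hadd : ∀ A B : Set Ω, MeasurableSet A → MeasurableSet B → Disjoint A B →
      m (A ∪ B) = m A + m B := by
    intro A B hA hB hAB
    refine tendsto_nhds_unique (hmten _ (hA.union hB)) ?_
    have := (hmten A hA).add (hmten B hB)
    exact this.congr (fun n => (VectorMeasure.of_union hAB hA hB).symm)
  refine ⟨{ measureOf' := m, empty' := hempty,
            not_measurable' := fun A hA => by rw [hmdef]; simp only [dif_neg hA],
            m_iUnion' := ?_ }, fun A hA => hmten A hA⟩
  intro f hf₁ hf₂
  set U : ℕ → Set Ω := fun mm => ⋃ i, ⋃ (_ : i < mm), f i with hUdef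
  set R : ℕ → Set Ω := fun mm => ⋃ i, f (mm + i) with hRdef
  have hUmeas : ∀ mm, MeasurableSet (U mm) :=
    fun mm => MeasurableSet.iUnion (fun i => MeasurableSet.iUnion (fun _ => hf₁ i))
  have hRmeas : ∀ mm, MeasurableSet (R mm) :=
    fun mm => MeasurableSet.iUnion (fun i => hf₁ (mm + i))
  have hRanti : Antitone R := by
    intro mm mm' hmm
    refine Set.iUnion_subset (fun i => ?_)
    have h : mm' + i = mm + (mm' + i - mm) := by omega
    rw [h]
    exact Set.subset_iUnion (fun j => f (mm + j)) _
  have hRempty : ⋂ mm, R mm = ∅ := by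
    rw [Set.eq_empty_iff_forall_notMem]
    intro x hx
    rw [Set.mem_iInter] at hx
    have h0 := hx 0
    rw [hRdef] at h0
    simp only [Set.mem_iUnion, zero_add] at h0
    obtain ⟨i₀, hi₀⟩ := h0
    have h1 := hx (i₀ + 1)
    simp only [hRdef, Set.mem_iUnion] at h1
    obtain ⟨i, hi⟩ := h1
    have hne : i₀ ≠ i₀ + 1 + i := by omega
    exact Set.disjoint_left.1 (hf₂ hne) hi₀ hi
  have hsplit : ∀ mm, (⋃ i, f i) = U mm ∪ R mm := by
    intro mm
    ext x
    simp only [hUdef, hRdef, Set.mem_union, Set.mem_iUnion]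
    constructor
    · rintro ⟨i, hi⟩
      rcases lt_or_ge i mm with h | h
      · exact Or.inl ⟨i, h, hi⟩
      · exact Or.inr ⟨i - mm, by rwa [show mm + (i - mm) = i by omega]⟩
    · rintro (⟨i, _, hi⟩ | ⟨i, hi⟩)
      · exact ⟨i, hi⟩
      · exact ⟨mm + i, hi⟩
  have hUR : ∀ mm, Disjoint (U mm) (R mm) := by
    intro mm
    rw [Set.disjoint_left]
    intro x hxU hxR
    simp only [hUdef, Set.mem_iUnion] at hxU
    simp only [hRdef, Set.mem_iUnion] at hxR
    obtain ⟨i, hilt, hi⟩ := hxU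
    obtain ⟨j, hj⟩ := hxR
    have hne : i ≠ mm + j := by omega
    exact Set.disjoint_left.1 (hf₂ hne) hi hj
  have hUadd : ∀ mm, m (U mm) = ∑ i ∈ Finset.range mm, m (f i) := by
    intro mm
    induction mm with
    | zero =>
      have : U 0 = ∅ := by
        rw [hUdef]; simp
      rw [this, hempty]; simp
    | succ n ih =>
      have hUsucc : U (n + 1) = U n ∪ f n := Set.biUnion_lt_succ f n
      have hdisj : Disjoint (U n) (f n) := by
        rw [Set.disjoint_left]
        intro x hxU hxf
        simp only [hUdef, Set.mem_iUnion] at hxU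
        obtain ⟨i, hilt, hi⟩ := hxU
        exact Set.disjoint_left.1 (hf₂ (by omega : i ≠ n)) hi hxf
      rw [hUsucc, hadd _ _ (hUmeas n) (hf₁ n) hdisj, ih, Finset.sum_range_succ]
  have hRzero : Tendsto (fun mm => m (R mm)) atTop (𝓝 0) :=
    nikodym_zero hC (fun A hA => ⟨L A hA, hL A hA⟩) hRmeas hRanti hRempty
      (fun mm => hmten _ (hRmeas mm))
  have htotsplit : ∀ mm, m (⋃ i, f i) = (∑ i ∈ Finset.range mm, m (f i)) + m (R mm) := by
    intro mm
    rw [← hUadd mm, ← hadd _ _ (hUmeas mm) (hRmeas mm) (hUR mm), ← hsplit mm]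
  have hpartial : Tendsto (fun mm => ∑ i ∈ Finset.range mm, m (f i)) atTop
      (𝓝 (m (⋃ i, f i))) := by
    have : (fun mm => ∑ i ∈ Finset.range mm, m (f i))
        = fun mm => m (⋃ i, f i) - m (R mm) := by
      funext mm
      have := htotsplit mm
      linarith
    rw [this]
    simpa using tendsto_const_nhds.sub hRzero
  have hsummable : Summable (fun i => m (f i)) := by
    refine Summable.of_norm ?_
    refine summable_of_sum_range_le (c := C) (fun i => norm_nonneg _) (fun mm => ?_)
    have hten : Tendsto (fun n => ∑ i ∈ Finset.range mm, |μ n (f i)|) atTop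
        (𝓝 (∑ i ∈ Finset.range mm, ‖m (f i)‖)) := by
      refine tendsto_finset_sum _ (fun i _ => ?_)
      simpa [Real.norm_eq_abs] using (hmten _ (hf₁ i)).abs
    refine le_of_tendsto hten (Eventually.of_forall (fun n => ?_))
    calc ∑ i ∈ Finset.range mm, |μ n (f i)|
        ≤ ∑ i ∈ Finset.range mm, ((μ n).totalVariation (f i)).toReal :=
          Finset.sum_le_sum (fun i _ => abs_sm_apply_le_tv (μ n) (hf₁ i))
    _ = (∑ i ∈ Finset.range mm, (μ n).totalVariation (f i)).toReal := by
          rw [ENNReal.toReal_sum (fun i _ => measure_ne_top _ _)]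
    _ = ((μ n).totalVariation (⋃ i ∈ Finset.range mm, f i)).toReal := by
          congr 1
          exact (measure_biUnion_finset
            (fun i _ => fun j _ hij => hf₂ hij) (fun i _ => hf₁ i)).symm
    _ ≤ ((μ n).totalVariation Set.univ).toReal :=
          ENNReal.toReal_mono (measure_ne_top _ _) (measure_mono (Set.subset_univ _))
    _ ≤ C := hC n
  have hhs := hsummable.hasSum
  have := hhs.tendsto_sum_nat
  have heq : (∑' i, m (f i)) = m (⋃ i, f i) := tendsto_nhds_unique this hpartial
  rwa [heq] at hhs

end LimitMeasure

section Kernels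
variable {Ω : Type*} [MeasurableSpace Ω]

lemma sum_abs_sm_le (μ : SignedMeasure Ω) {f : ℕ → Set Ω} (hf₁ : ∀ i, MeasurableSet (f i))
    (hf₂ : Pairwise (Function.onFun Disjoint f)) (mm : ℕ) :
    ∑ i ∈ Finset.range mm, |μ (f i)| ≤ tvNorm μ := by
  calc ∑ i ∈ Finset.range mm, |μ (f i)|
      ≤ ∑ i ∈ Finset.range mm, (μ.totalVariation (f i)).toReal :=
        Finset.sum_le_sum (fun i _ => abs_sm_apply_le_tv μ (hf₁ i))
  _ = (∑ i ∈ Finset.range mm, μ.totalVariation (f i)).toReal := by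
        rw [ENNReal.toReal_sum (fun i _ => measure_ne_top _ _)]
  _ = (μ.totalVariation (⋃ i ∈ Finset.range mm, f i)).toReal := by
        congr 1
        exact (measure_biUnion_finset (fun i _ j _ hij => hf₂ hij) (fun i _ => hf₁ i)).symm
  _ ≤ (μ.totalVariation Set.univ).toReal :=
        ENNReal.toReal_mono (measure_ne_top _ _) (measure_mono (Set.subset_univ _))

lemma kernel_limit (k : ℕ → Ω → SignedMeasure Ω) (hk : ∀ n, IsBoundedKernel (k n))
    {C : ℝ} (hbdd : ∀ n x, tvNorm (k n x) ≤ C)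
    (h1 : ∀ (x : Ω) (A : Set Ω), MeasurableSet A →
      ∃ l, Tendsto (fun n => k n x A) atTop (𝓝 l)) :
    ∃ κ : Ω → SignedMeasure Ω,
      (∀ A : Set Ω, MeasurableSet A → Measurable fun x => κ x A) ∧
      (∀ x, tvNorm (κ x) ≤ 2*C) ∧
      (∀ (x : Ω) (A : Set Ω), MeasurableSet A →
        Tendsto (fun n => k n x A) atTop (𝓝 (κ x A))) := by
  have hex := fun x => exists_limit_sm (fun n => k n x) (fun n => hbdd n x) (h1 x)
  choose κ hκ using hex
  refine ⟨κ, ?_, ?_, fun x A hA => hκ x A hA⟩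
  · intro A hA
    exact measurable_of_tendsto_metrizable (fun n => (hk n).1 A hA)
      (tendsto_pi_nhds.2 fun x => hκ x A hA)
  · intro x
    refine tvNorm_le_two_mul (fun A hA => ?_)
    refine le_of_tendsto (hκ x A hA).abs (Eventually.of_forall fun n => ?_)
    exact (abs_sm_apply_le_tvNorm (k n x) hA).trans (hbdd n x)

lemma kernel_S (κ : Ω → SignedMeasure Ω)
    (hκm : ∀ A : Set Ω, MeasurableSet A → Measurable fun x => κ x A)
    {Cκ : ℝ} (hκb : ∀ x, tvNorm (κ x) ≤ Cκ) (ν : SignedMeasure Ω) :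
    ∃ S' : SignedMeasure Ω, ∀ A : Set Ω, MeasurableSet A →
      S' A = sInt ν (fun x => κ x A) := by
  classical
  have hbm : ∀ A : Set Ω, MeasurableSet A → IsBddMeas (fun x => κ x A) := fun A hA =>
    ⟨hκm A hA, Cκ, fun x => (abs_sm_apply_le_tvNorm (κ x) hA).trans (hκb x)⟩
  set m : Set Ω → ℝ :=
    fun A => if h : MeasurableSet A then sInt ν (fun x => κ x A) else 0 with hmdef
  have mdef : ∀ A : Set Ω, MeasurableSet A → m A = sInt ν (fun x => κ x A) :=
    fun A hA => dif_pos hA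
  refine ⟨{ measureOf' := m, empty' := ?_,
            not_measurable' := fun A hA => dif_neg hA, m_iUnion' := ?_ }, mdef⟩
  · rw [mdef ∅ MeasurableSet.empty]
    have h0 : (fun x => κ x (∅ : Set Ω)) = fun _ => (0:ℝ) := funext fun x => (κ x).empty
    rw [h0]
    unfold sInt
    simp
  · intro f hf₁ hf₂
    have hUmeas : MeasurableSet (⋃ i, f i) := MeasurableSet.iUnion hf₁
    have hGten : ∀ x, Tendsto (fun mm => ∑ i ∈ Finset.range mm, κ x (f i)) atTop
        (𝓝 (κ x (⋃ i, f i))) := fun x => ((κ x).m_iUnion hf₁ hf₂).tendsto_sum_nat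
    have hGbd : ∀ (mm : ℕ) (x : Ω), |∑ i ∈ Finset.range mm, κ x (f i)| ≤ Cκ := by
      intro mm x
      calc |∑ i ∈ Finset.range mm, κ x (f i)|
          ≤ ∑ i ∈ Finset.range mm, |κ x (f i)| := Finset.abs_sum_le_sum_abs _ _
      _ ≤ tvNorm (κ x) := sum_abs_sm_le (κ x) hf₁ hf₂ mm
      _ ≤ Cκ := hκb x
    have hpartial : Tendsto (fun mm => sInt ν (fun x => ∑ i ∈ Finset.range mm, κ x (f i)))
        atTop (𝓝 (sInt ν (fun x => κ x (⋃ i, f i)))) :=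
      sInt_tendsto_dominated ν
        (fun mm => Finset.measurable_sum _ (fun i _ => hκm _ (hf₁ i))) hGbd hGten
    have hpartial' : Tendsto (fun mm => ∑ i ∈ Finset.range mm, sInt ν (fun x => κ x (f i)))
        atTop (𝓝 (sInt ν (fun x => κ x (⋃ i, f i)))) := by
      refine hpartial.congr (fun mm => ?_)
      exact sInt_finset_sum ν _ _ (fun i _ => hbm _ (hf₁ i))
    -- summability
    have habs_each : ∀ (g : Ω → ℝ), IsBddMeas g → |sInt ν g|
        ≤ (∫ x, |g x| ∂ν.toJordanDecomposition.posPart)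
          + ∫ x, |g x| ∂ν.toJordanDecomposition.negPart := by
      intro g hg
      unfold sInt
      have h1 := norm_integral_le_integral_norm (μ := ν.toJordanDecomposition.posPart) g
      have h2 := norm_integral_le_integral_norm (μ := ν.toJordanDecomposition.negPart) g
      simp only [Real.norm_eq_abs] at h1 h2
      have := abs_sub (∫ x, g x ∂ν.toJordanDecomposition.posPart)
        (∫ x, g x ∂ν.toJordanDecomposition.negPart)
      linarith
    have hsummable : Summable (fun i => sInt ν (fun x => κ x (f i))) := by
      refine Summable.of_norm ?_
      refine summable_of_sum_range_le
        (c := Cκ * ((ν.toJordanDecomposition.posPart Set.univ).toReal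
          + (ν.toJordanDecomposition.negPart Set.univ).toReal))
        (fun i => norm_nonneg _) (fun mm => ?_)
      have habsbm : ∀ i : ℕ, IsBddMeas (fun x => |κ x (f i)|) := fun i =>
        ⟨(hκm _ (hf₁ i)).abs, Cκ, fun x => by
          rw [abs_abs]
          exact (abs_sm_apply_le_tvNorm (κ x) (hf₁ i)).trans (hκb x)⟩
      have hsum_bound : ∀ (p : Measure Ω) [IsFiniteMeasure p],
          ∑ i ∈ Finset.range mm, ∫ x, |κ x (f i)| ∂p ≤ Cκ * (p Set.univ).toReal := by
        intro p hp
        rw [← integral_finset_sum _ (fun i _ => integrable_of_bddmeas p (habsbm i))]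
        calc ∫ x, ∑ i ∈ Finset.range mm, |κ x (f i)| ∂p
            ≤ ∫ _x, Cκ ∂p := by
              refine integral_mono (integrable_finset_sum _
                (fun i _ => integrable_of_bddmeas p (habsbm i))) (integrable_const _)
                (fun x => ?_)
              exact (sum_abs_sm_le (κ x) hf₁ hf₂ mm).trans (hκb x)
        _ = (p Set.univ).toReal • Cκ := by rw [integral_const]; rfl
        _ = Cκ * (p Set.univ).toReal := by rw [smul_eq_mul]; ring
      calc ∑ i ∈ Finset.range mm, ‖sInt ν (fun x => κ x (f i))‖
          ≤ ∑ i ∈ Finset.range mm,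
            ((∫ x, |κ x (f i)| ∂ν.toJordanDecomposition.posPart)
              + ∫ x, |κ x (f i)| ∂ν.toJordanDecomposition.negPart) := by
            refine Finset.sum_le_sum (fun i _ => ?_)
            rw [Real.norm_eq_abs]
            exact habs_each _ (hbm _ (hf₁ i))
      _ = (∑ i ∈ Finset.range mm, ∫ x, |κ x (f i)| ∂ν.toJordanDecomposition.posPart)
            + ∑ i ∈ Finset.range mm, ∫ x, |κ x (f i)| ∂ν.toJordanDecomposition.negPart :=
            Finset.sum_add_distrib
      _ ≤ Cκ * (ν.toJordanDecomposition.posPart Set.univ).toReal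
            + Cκ * (ν.toJordanDecomposition.negPart Set.univ).toReal := by
            have b1 := hsum_bound ν.toJordanDecomposition.posPart
            have b2 := hsum_bound ν.toJordanDecomposition.negPart
            linarith
      _ = _ := by ring
    have hm_eq : (fun i => m (f i)) = fun i => sInt ν (fun x => κ x (f i)) :=
      funext fun i => mdef _ (hf₁ i)
    rw [show m (⋃ i, f i) = sInt ν (fun x => κ x (⋃ i, f i)) from mdef _ hUmeas, hm_eq]
    have hhs := hsummable.hasSum
    have heq : (∑' i, sInt ν (fun x => κ x (f i))) = sInt ν (fun x => κ x (⋃ i, f i)) :=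
      tendsto_nhds_unique hhs.tendsto_sum_nat hpartial'
    rwa [heq] at hhs

lemma jordan_of_measure (ν : Measure Ω) [IsFiniteMeasure ν] :
    ν.toSignedMeasure.toJordanDecomposition
      = ⟨ν, 0, Measure.MutuallySingular.zero_right⟩ := by
  apply SignedMeasure.toJordanDecomposition_eq
  show ν.toSignedMeasure
      = (⟨ν, 0, Measure.MutuallySingular.zero_right⟩ : JordanDecomposition Ω).toSignedMeasure
  rw [JordanDecomposition.toSignedMeasure]
  show ν.toSignedMeasure = ν.toSignedMeasure - (0 : Measure Ω).toSignedMeasure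
  rw [Measure.toSignedMeasure_zero, sub_zero]

lemma sInt_toSignedMeasure (ν : Measure Ω) [IsFiniteMeasure ν] (f : Ω → ℝ) :
    sInt ν.toSignedMeasure f = ∫ x, f x ∂ν := by
  unfold sInt
  rw [jordan_of_measure ν]
  simp

lemma sInt_dirac {x : Ω} {f : Ω → ℝ} (hf : Measurable f) :
    sInt (Measure.dirac x).toSignedMeasure f = f x := by
  rw [sInt_toSignedMeasure, integral_dirac' f x hf.stronglyMeasurable]

end Kernels

/-- **Convergence of kernel operators (Proposition on sequences of kernels).**
Let `(kₙ)` be a uniformly bounded sequence of bounded kernels on a measurable space `Ω`,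
with associated kernel operators `Sₙ` on `M(Ω)` and `Tₙ` on `B_b(Ω)`. Then the pointwise
convergence of the kernels, the `σ(M(Ω), B_b(Ω))`-convergence of `(Sₙ μ)` for every `μ`,
and the `σ(B_b(Ω), M(Ω))`-convergence of `(Tₙ f)` for every `f` are all equivalent; and in
this case the limits are given by a bounded limit kernel `κ` and its associated kernel
operators. -/
theorem kernel_operator_sequence_convergence_tfae
    {Ω : Type*} [MeasurableSpace Ω]
    (k : ℕ → Ω → SignedMeasure Ω)
    (hk : ∀ n, IsBoundedKernel (k n))
    (hbdd : ∃ C : ℝ, ∀ n x, tvNorm (k n x) ≤ C)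
    (S : ℕ → SignedMeasure Ω → SignedMeasure Ω)
    (hS : ∀ n (ν : SignedMeasure Ω) (A : Set Ω), MeasurableSet A →
      S n ν A = sInt ν (fun x => k n x A))
    (T : ℕ → (Ω → ℝ) → Ω → ℝ)
    (hT : ∀ n (f : Ω → ℝ), IsBddMeas f → ∀ x, T n f x = sInt (k n x) f) :
    -- the three assertions are equivalent:
    (((∀ (x : Ω) (A : Set Ω), MeasurableSet A →
        ∃ l : ℝ, Tendsto (fun n => k n x A) atTop (𝓝 l)) ↔
      (∀ μ : SignedMeasure Ω, ∃ Sμ : SignedMeasure Ω, ∀ f : Ω → ℝ, IsBddMeas f →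
        Tendsto (fun n => sInt (S n μ) f) atTop (𝓝 (sInt Sμ f)))) ∧
    ((∀ μ : SignedMeasure Ω, ∃ Sμ : SignedMeasure Ω, ∀ f : Ω → ℝ, IsBddMeas f →
        Tendsto (fun n => sInt (S n μ) f) atTop (𝓝 (sInt Sμ f))) ↔
      (∀ f : Ω → ℝ, IsBddMeas f → ∃ Tf : Ω → ℝ, IsBddMeas Tf ∧ ∀ μ : SignedMeasure Ω,
        Tendsto (fun n => sInt μ (T n f)) atTop (𝓝 (sInt μ Tf))))) ∧
    -- and if they hold, the limits come from a bounded limit kernel: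
    ((∀ (x : Ω) (A : Set Ω), MeasurableSet A →
        ∃ l : ℝ, Tendsto (fun n => k n x A) atTop (𝓝 l)) →
      ∃ κ : Ω → SignedMeasure Ω, IsBoundedKernel κ ∧
        (∀ (x : Ω) (A : Set Ω), MeasurableSet A →
          Tendsto (fun n => k n x A) atTop (𝓝 (κ x A))) ∧
        (∃ S' : SignedMeasure Ω → SignedMeasure Ω,
          (∀ (ν : SignedMeasure Ω) (A : Set Ω), MeasurableSet A →
            S' ν A = sInt ν (fun x => κ x A)) ∧
          ∀ (μ : SignedMeasure Ω) (f : Ω → ℝ), IsBddMeas f →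
            Tendsto (fun n => sInt (S n μ) f) atTop (𝓝 (sInt (S' μ) f))) ∧
        (∃ T' : (Ω → ℝ) → Ω → ℝ,
          (∀ f : Ω → ℝ, IsBddMeas f → ∀ x, T' f x = sInt (κ x) f) ∧
          ∀ f : Ω → ℝ, IsBddMeas f → ∀ μ : SignedMeasure Ω,
            Tendsto (fun n => sInt μ (T n f)) atTop (𝓝 (sInt μ (T' f))))) := by
  classical
  obtain ⟨C₀, hC₀⟩ := hbdd
  set C : ℝ := max C₀ 0 with hCdef
  have hC : ∀ n x, tvNorm (k n x) ≤ C := fun n x => (hC₀ n x).trans (le_max_left _ _)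
  have hC0 : (0:ℝ) ≤ C := le_max_right _ _
  have hindbm : ∀ A : Set Ω, MeasurableSet A →
      IsBddMeas (fun y => A.indicator (fun _ => (1:ℝ)) y) := by
    intro A hA
    exact ⟨measurable_const.indicator hA, 1, fun y => by
      by_cases hy : y ∈ A <;> simp [Set.indicator, hy]⟩
  -- (ii) implies (i)
  have h21 : (∀ μ : SignedMeasure Ω, ∃ Sμ : SignedMeasure Ω, ∀ f : Ω → ℝ, IsBddMeas f →
        Tendsto (fun n => sInt (S n μ) f) atTop (𝓝 (sInt Sμ f))) →
      (∀ (x : Ω) (A : Set Ω), MeasurableSet A →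
        ∃ l : ℝ, Tendsto (fun n => k n x A) atTop (𝓝 l)) := by
    intro h2 x A hA
    obtain ⟨Sμ, hSμ⟩ := h2 (Measure.dirac x).toSignedMeasure
    refine ⟨sInt Sμ (fun y => A.indicator (fun _ => (1:ℝ)) y), ?_⟩
    refine (hSμ _ (hindbm A hA)).congr (fun n => ?_)
    rw [sInt_indicator _ hA, hS n _ A hA, sInt_dirac ((hk n).1 A hA)]
  -- (iii) implies (i)
  have h31 : (∀ f : Ω → ℝ, IsBddMeas f → ∃ Tf : Ω → ℝ, IsBddMeas Tf ∧
        ∀ μ : SignedMeasure Ω,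
        Tendsto (fun n => sInt μ (T n f)) atTop (𝓝 (sInt μ Tf))) →
      (∀ (x : Ω) (A : Set Ω), MeasurableSet A →
        ∃ l : ℝ, Tendsto (fun n => k n x A) atTop (𝓝 l)) := by
    intro h3 x A hA
    obtain ⟨Tf, hTfbm, hTf⟩ := h3 _ (hindbm A hA)
    have hlim : Tendsto (fun n => k n x A) atTop
        (𝓝 (sInt (Measure.dirac x).toSignedMeasure Tf)) := by
      refine (hTf (Measure.dirac x).toSignedMeasure).congr (fun n => ?_)
      have hTn : T n (fun y => A.indicator (fun _ => (1:ℝ)) y) = fun y => k n y A :=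
        funext fun y => by rw [hT n _ (hindbm A hA) y, sInt_indicator _ hA]
      rw [hTn, sInt_dirac ((hk n).1 A hA)]
    rw [sInt_dirac hTfbm.1] at hlim
    exact ⟨Tf x, hlim⟩
  -- the key construction from (i)
  have key : (∀ (x : Ω) (A : Set Ω), MeasurableSet A →
        ∃ l : ℝ, Tendsto (fun n => k n x A) atTop (𝓝 l)) →
      ((∀ μ : SignedMeasure Ω, ∃ Sμ : SignedMeasure Ω, ∀ f : Ω → ℝ, IsBddMeas f →
          Tendsto (fun n => sInt (S n μ) f) atTop (𝓝 (sInt Sμ f))) ∧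
       (∀ f : Ω → ℝ, IsBddMeas f → ∃ Tf : Ω → ℝ, IsBddMeas Tf ∧ ∀ μ : SignedMeasure Ω,
          Tendsto (fun n => sInt μ (T n f)) atTop (𝓝 (sInt μ Tf))) ∧
       (∃ κ : Ω → SignedMeasure Ω, IsBoundedKernel κ ∧
        (∀ (x : Ω) (A : Set Ω), MeasurableSet A →
          Tendsto (fun n => k n x A) atTop (𝓝 (κ x A))) ∧
        (∃ S' : SignedMeasure Ω → SignedMeasure Ω,
          (∀ (ν : SignedMeasure Ω) (A : Set Ω), MeasurableSet A →
            S' ν A = sInt ν (fun x => κ x A)) ∧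
          ∀ (μ : SignedMeasure Ω) (f : Ω → ℝ), IsBddMeas f →
            Tendsto (fun n => sInt (S n μ) f) atTop (𝓝 (sInt (S' μ) f))) ∧
        (∃ T' : (Ω → ℝ) → Ω → ℝ,
          (∀ f : Ω → ℝ, IsBddMeas f → ∀ x, T' f x = sInt (κ x) f) ∧
          ∀ f : Ω → ℝ, IsBddMeas f → ∀ μ : SignedMeasure Ω,
            Tendsto (fun n => sInt μ (T n f)) atTop (𝓝 (sInt μ (T' f)))))) := by
    intro h1
    obtain ⟨κ, hκm, hκb, hκten⟩ := kernel_limit k hk hC h1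
    choose S' hS' using kernel_S κ hκm hκb
    have hSnb : ∀ n (ν : SignedMeasure Ω), tvNorm (S n ν) ≤ 2*(C * tvNorm ν) := by
      intro n ν
      refine tvNorm_le_two_mul (fun A hA => ?_)
      rw [hS n ν A hA]
      exact sInt_abs_le ν (fun x => (abs_sm_apply_le_tvNorm (k n x) hA).trans (hC n x))
    have hS'b : ∀ ν : SignedMeasure Ω, tvNorm (S' ν) ≤ 2*((2*C) * tvNorm ν) := by
      intro ν
      refine tvNorm_le_two_mul (fun A hA => ?_)
      rw [hS' ν A hA]
      exact sInt_abs_le ν (fun x => (abs_sm_apply_le_tvNorm (κ x) hA).trans (hκb x))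
    have hSset : ∀ (ν : SignedMeasure Ω) (A : Set Ω), MeasurableSet A →
        Tendsto (fun n => S n ν A) atTop (𝓝 (S' ν A)) := by
      intro ν A hA
      rw [hS' ν A hA]
      have hdom := sInt_tendsto_dominated ν (g := fun n x => k n x A)
        (G := fun x => κ x A) (C := C) (fun n => (hk n).1 A hA)
        (fun n x => (abs_sm_apply_le_tvNorm (k n x) hA).trans (hC n x))
        (fun x => hκten x A hA)
      exact hdom.congr (fun n => (hS n ν A hA).symm)
    have hSconv : ∀ (μ : SignedMeasure Ω) (f : Ω → ℝ), IsBddMeas f →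
        Tendsto (fun n => sInt (S n μ) f) atTop (𝓝 (sInt (S' μ) f)) := by
      intro μ f hf
      refine sInt_tendsto_of_setwise (C := 2*((2*C) * tvNorm μ)) (fun n => ?_) (hS'b μ)
        (hSset μ) hf
      have h0 := tvNorm_nonneg μ
      have := hSnb n μ
      have hcc : 0 ≤ C * tvNorm μ := mul_nonneg hC0 h0
      linarith
    have hTbm : ∀ f : Ω → ℝ, IsBddMeas f → IsBddMeas (fun x => sInt (κ x) f) := by
      intro f hf
      obtain ⟨hfm, M, hM⟩ := hf
      refine ⟨measurable_sInt hκm hκb ⟨hfm, M, hM⟩, |M| * (2*C), fun x => ?_⟩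
      have h1 : |sInt (κ x) f| ≤ M * tvNorm (κ x) := sInt_abs_le (κ x) hM
      have h2 := hκb x
      have h3 := tvNorm_nonneg (κ x)
      have e1 : M * tvNorm (κ x) ≤ |M| * tvNorm (κ x) :=
        mul_le_mul_of_nonneg_right (le_abs_self M) h3
      have e2 : |M| * tvNorm (κ x) ≤ |M| * (2*C) :=
        mul_le_mul_of_nonneg_left h2 (abs_nonneg M)
      linarith
    have hTpt : ∀ (f : Ω → ℝ), IsBddMeas f → ∀ x,
        Tendsto (fun n => sInt (k n x) f) atTop (𝓝 (sInt (κ x) f)) := by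
      intro f hf x
      exact sInt_tendsto_of_setwise (C := 2*C) (fun n => (hC n x).trans (by linarith))
        (hκb x) (fun A hA => hκten x A hA) hf
    have hTconv : ∀ (f : Ω → ℝ), IsBddMeas f → ∀ μ : SignedMeasure Ω,
        Tendsto (fun n => sInt μ (T n f)) atTop (𝓝 (sInt μ (fun x => sInt (κ x) f))) := by
      intro f hf μ
      obtain ⟨hfm, M, hM⟩ := hf
      have hbnd : ∀ (n : ℕ) (x : Ω), |sInt (k n x) f| ≤ |M| * C := by
        intro n x
        have h1 : |sInt (k n x) f| ≤ M * tvNorm (k n x) := sInt_abs_le _ hM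
        have h2 := hC n x
        have h3 := tvNorm_nonneg (k n x)
        have e1 : M * tvNorm (k n x) ≤ |M| * tvNorm (k n x) :=
          mul_le_mul_of_nonneg_right (le_abs_self M) h3
        have e2 : |M| * tvNorm (k n x) ≤ |M| * C :=
          mul_le_mul_of_nonneg_left h2 (abs_nonneg M)
        linarith
      have hdom := sInt_tendsto_dominated μ (g := fun n x => sInt (k n x) f)
        (G := fun x => sInt (κ x) f) (C := |M| * C)
        (fun n => measurable_sInt ((hk n).1) (fun x => hC n x) ⟨hfm, M, hM⟩)
        hbnd (hTpt f ⟨hfm, M, hM⟩)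
      refine hdom.congr (fun n => ?_)
      congr 1
      exact (funext (hT n f ⟨hfm, M, hM⟩)).symm
    refine ⟨fun μ => ⟨S' μ, hSconv μ⟩,
            fun f hf => ⟨fun x => sInt (κ x) f, hTbm f hf, hTconv f hf⟩,
            κ, ⟨hκm, 2*C, hκb⟩, hκten,
            ⟨S', fun ν A hA => hS' ν A hA, fun μ f hf => hSconv μ f hf⟩,
            ⟨fun f x => sInt (κ x) f, fun f hf x => rfl, fun f hf μ => hTconv f hf μ⟩⟩
  exact ⟨⟨⟨fun h1 => (key h1).1, h21⟩,
          ⟨fun h2 => (key (h21 h2)).2.1, fun h3 => (key (h31 h3)).1⟩⟩,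
         fun h1 => (key h1).2.2⟩
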